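/- Let P, Q be symmetric positive definite n×n real matrices and σ > 0. If x, e ∈ ℝⁿ and u, u_safe ∈ ℝᵐ satisfy the triggering bound 2 xᵀ P B K e ≤ σ xᵀ P x and the safety-gate condition 2 xᵀ P B (u - u_safe) < σ xᵀ P x, then -xᵀ Q x + 2 xᵀ P B K e + 2 xᵀ P B (u - u_safe) < -(λ_min(Q) - 2 σ λ_max(P)) ‖x‖² + σ xᵀ P x - σ xᵀ P x ≤ -(λ_min(Q) - 2 σ λ_max(P)) ‖x‖²; in particular, if σ < λ_min(Q)/(2 λ_max(P)), this quantity is strictly negative for every x ≠ 0. -/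

import Mathlib

open Matrix

lemma quad_eq {n : ℕ} {M : Matrix (Fin n) (Fin n) ℝ} (hM : M.IsHermitian) (x : Fin n → ℝ) :
    x ⬝ᵥ (M *ᵥ x) =
      ∑ i, hM.eigenvalues i *
        ((star (hM.eigenvectorUnitary : Matrix (Fin n) (Fin n) ℝ) *ᵥ x) i)^2 := by
  set U : Matrix (Fin n) (Fin n) ℝ := (hM.eigenvectorUnitary : Matrix (Fin n) (Fin n) ℝ)
  set y := star U *ᵥ x with hy
  conv_lhs => rw [hM.spectral_theorem, Unitary.conjStarAlgAut_apply]
  rw [← mulVec_mulVec, ← mulVec_mulVec, dotProduct_mulVec]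
  have hv : x ᵥ* U = y := by
    rw [hy, star_eq_conjTranspose, conjTranspose_eq_transpose_of_trivial, mulVec_transpose]
  rw [hv]
  simp only [dotProduct, mulVec_diagonal, Function.comp_apply, RCLike.ofReal_real_eq_id, id_eq]
  exact Finset.sum_congr rfl fun i _ => by ring

lemma norm_eq {n : ℕ} {M : Matrix (Fin n) (Fin n) ℝ} (hM : M.IsHermitian) (x : Fin n → ℝ) :
    x ⬝ᵥ x = ∑ i, ((star (hM.eigenvectorUnitary : Matrix (Fin n) (Fin n) ℝ) *ᵥ x) i)^2 := by
  set U : Matrix (Fin n) (Fin n) ℝ := (hM.eigenvectorUnitary : Matrix (Fin n) (Fin n) ℝ)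
  have h1 : (star U *ᵥ x) ⬝ᵥ (star U *ᵥ x) = x ⬝ᵥ x := by
    rw [dotProduct_mulVec, star_eq_conjTranspose, conjTranspose_eq_transpose_of_trivial,
      vecMul_transpose, mulVec_mulVec]
    have : U * Uᵀ = 1 := by
      have := (Matrix.mem_unitaryGroup_iff).mp hM.eigenvectorUnitary.2
      rwa [star_eq_conjTranspose, conjTranspose_eq_transpose_of_trivial] at this
    rw [this, one_mulVec]
  rw [← h1]; simp [dotProduct, pow_two]

lemma quad_lower {n : ℕ} {M : Matrix (Fin n) (Fin n) ℝ} (hM : M.IsHermitian) (x : Fin n → ℝ) :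
    (⨅ i, hM.eigenvalues i) * (x ⬝ᵥ x) ≤ x ⬝ᵥ (M *ᵥ x) := by
  rw [quad_eq hM x, norm_eq hM x, Finset.mul_sum]
  refine Finset.sum_le_sum fun i _ => ?_
  exact mul_le_mul_of_nonneg_right (ciInf_le (Set.finite_range _).bddBelow i) (sq_nonneg _)

lemma quad_upper {n : ℕ} {M : Matrix (Fin n) (Fin n) ℝ} (hM : M.IsHermitian) (x : Fin n → ℝ) :
    x ⬝ᵥ (M *ᵥ x) ≤ (⨆ i, hM.eigenvalues i) * (x ⬝ᵥ x) := by
  rw [quad_eq hM x, norm_eq hM x, Finset.mul_sum]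
  refine Finset.sum_le_sum fun i _ => ?_
  exact mul_le_mul_of_nonneg_right (le_ciSup (Set.finite_range _).bddAbove i) (sq_nonneg _)

lemma norm_sq_eq_dot {n : ℕ} (x : EuclideanSpace ℝ (Fin n)) :
    ‖x‖ ^ 2 = x ⬝ᵥ (x : Fin n → ℝ) := by
  rw [EuclideanSpace.norm_eq, Real.sq_sqrt (by positivity)]
  simp [dotProduct, sq, Real.norm_eq_abs, abs_mul_abs_self]



/-- **Lyapunov Safety Gate decay bound.**
If the triggering bound `2 xᵀ P B K e ≤ σ xᵀ P x` and the safety-gate condition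
`2 xᵀ P B (u - u_safe) < σ xᵀ P x` hold, then the Lyapunov derivative satisfies
`-xᵀ Q x + 2 xᵀ P B K e + 2 xᵀ P B (u - u_safe)
   < -(λ_min(Q) - 2 σ λ_max(P)) ‖x‖² + σ xᵀ P x - σ xᵀ P x
   ≤ -(λ_min(Q) - 2 σ λ_max(P)) ‖x‖²`;
in particular, if `σ < λ_min(Q)/(2 λ_max(P))` it is strictly negative for `x ≠ 0`. -/
theorem safety_gate_decay_bound {n m : ℕ}
    (A : Matrix (Fin n) (Fin n) ℝ) (B : Matrix (Fin n) (Fin m) ℝ)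
    (K : Matrix (Fin m) (Fin n) ℝ) (P Q : Matrix (Fin n) (Fin n) ℝ)
    (hP : P.PosDef) (hQ : Q.PosDef) (σ : ℝ) (hσ : 0 < σ)
    (x : EuclideanSpace ℝ (Fin n)) (e : EuclideanSpace ℝ (Fin n))
    (u usafe : Fin m → ℝ)
    (htrig : 2 * (x ⬝ᵥ ((P * B * K) *ᵥ e)) ≤ σ * (x ⬝ᵥ (P *ᵥ x)))
    (hgate : 2 * (x ⬝ᵥ ((P * B) *ᵥ (u - usafe))) < σ * (x ⬝ᵥ (P *ᵥ x))) :
    let lminQ : ℝ := ⨅ i, hQ.isHermitian.eigenvalues i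
    let lmaxP : ℝ := ⨆ i, hP.isHermitian.eigenvalues i
    let Vdot : ℝ := -(x ⬝ᵥ (Q *ᵥ x)) + 2 * (x ⬝ᵥ ((P * B * K) *ᵥ e))
      + 2 * (x ⬝ᵥ ((P * B) *ᵥ (u - usafe)))
    (Vdot < -(lminQ - 2 * σ * lmaxP) * ‖x‖ ^ 2
        + σ * (x ⬝ᵥ (P *ᵥ x)) - σ * (x ⬝ᵥ (P *ᵥ x))) ∧
    (-(lminQ - 2 * σ * lmaxP) * ‖x‖ ^ 2 + σ * (x ⬝ᵥ (P *ᵥ x)) - σ * (x ⬝ᵥ (P *ᵥ x))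
        ≤ -(lminQ - 2 * σ * lmaxP) * ‖x‖ ^ 2) ∧
    (σ < lminQ / (2 * lmaxP) → x ≠ 0 → Vdot < 0) := by
  intro lminQ lmaxP Vdot
  set t : ℝ := x ⬝ᵥ (x : Fin n → ℝ) with ht
  have hnorm : ‖x‖ ^ 2 = t := norm_sq_eq_dot x
  have hQb : lminQ * t ≤ x ⬝ᵥ (Q *ᵥ x) := quad_lower hQ.isHermitian x
  have hPb : x ⬝ᵥ (P *ᵥ x) ≤ lmaxP * t := quad_upper hP.isHermitian x
  have hPσ : σ * (x ⬝ᵥ (P *ᵥ x)) ≤ σ * (lmaxP * t) := by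
    exact mul_le_mul_of_nonneg_left hPb hσ.le
  have key : -(lminQ - 2 * σ * lmaxP) * ‖x‖ ^ 2 = -(lminQ * t) + 2 * (σ * (lmaxP * t)) := by
    rw [hnorm]; ring
  have h1 : Vdot < -(lminQ - 2 * σ * lmaxP) * ‖x‖ ^ 2
      + σ * (x ⬝ᵥ (P *ᵥ x)) - σ * (x ⬝ᵥ (P *ᵥ x)) := by
    have : Vdot < -(lminQ * t) + σ * (x ⬝ᵥ (P *ᵥ x)) + σ * (x ⬝ᵥ (P *ᵥ x)) := by
      simp only [Vdot]; linarith
    linarith [hPσ, key]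
  have h2 : -(lminQ - 2 * σ * lmaxP) * ‖x‖ ^ 2 + σ * (x ⬝ᵥ (P *ᵥ x)) - σ * (x ⬝ᵥ (P *ᵥ x))
      ≤ -(lminQ - 2 * σ * lmaxP) * ‖x‖ ^ 2 := le_of_eq (by ring)
  refine ⟨h1, h2, fun hσ' hx => ?_⟩
  have hxpos : 0 < ‖x‖ ^ 2 := by have := norm_pos_iff.mpr hx; positivity
  have hne : Nonempty (Fin n) := by
    by_contra h
    exact hx (PiLp.ext fun i => ((h ⟨i⟩).elim))
  obtain ⟨i0⟩ := hne
  have hmax : 0 < lmaxP := lt_of_lt_of_le (hP.eigenvalues_pos i0)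
    (le_ciSup (Set.finite_range _).bddAbove i0)
  have hc : 2 * σ * lmaxP < lminQ := by
    have := (lt_div_iff₀ (by positivity : (0:ℝ) < 2 * lmaxP)).mp hσ'
    linarith
  have : Vdot < -(lminQ - 2 * σ * lmaxP) * ‖x‖ ^ 2 := h1.trans_le h2
  nlinarith
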